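/- Let p ≥ 1 be a real number and let ia : V → ℝ be a nonnegative weight function on a type V. For finite sets F, G of elements of V define the normalized semantic distance d_N(F,G) = (ru(F,G)^p + mi(F,G)^p)^(1/p) / Σ_{v ∈ F ∪ G} ia(v) when Σ_{v ∈ F ∪ G} ia(v) > 0, and d_N(F,G) = 0 otherwise, where ru(F,G) = Σ_{v ∈ G \ F} ia(v) and mi(F,G) = Σ_{v ∈ F \ G} ia(v). Then d_N satisfies the triangle inequality: for all finite sets F, G, H, d_N(F,H) ≤ d_N(F,G) + d_N(G,H). -/

import Mathlib

/-- Remaining uncertainty: total information accretion of nodes of `G` not in `F`. -/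
def ru {V : Type*} [DecidableEq V] (ia : V → ℝ) (F G : Finset V) : ℝ :=
  ∑ v ∈ G \ F, ia v

/-- Misinformation: total information accretion of nodes of `F` not in `G`. -/
def mi {V : Type*} [DecidableEq V] (ia : V → ℝ) (F G : Finset V) : ℝ :=
  ∑ v ∈ F \ G, ia v

/-- The normalized semantic distance:
`d_N(F,G) = (ru(F,G)^p + mi(F,G)^p)^(1/p) / ∑_{v ∈ F ∪ G} ia(v)`
when the denominator is positive, and `0` otherwise. -/
noncomputable def semDistN {V : Type*} [DecidableEq V] (ia : V → ℝ) (p : ℝ)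
    (F G : Finset V) : ℝ :=
  if 0 < ∑ v ∈ F ∪ G, ia v then
    (ru ia F G ^ p + mi ia F G ^ p) ^ (1 / p) / ∑ v ∈ F ∪ G, ia v
  else 0

/-- Scalar core of the one-sided triangle inequality. -/
private theorem scalar_core (x1 x2 x3 y13 y23 S : ℝ) (h1 : 0 ≤ x1) (h2 : 0 ≤ x2) (h3 : 0 ≤ x3)
    (h4 : 0 ≤ y13) (h5 : 0 ≤ y23) (hS : x1 + x2 + x3 + y13 + y23 ≤ S)
    (hA : 0 < S - x2) (hB : 0 < S - x3) (hC : 0 < S - x1) :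
    (x3 + y23) / (S - x2) ≤ (x2 + y23) / (S - x3) + (x3 + y13) / (S - x1) := by
  obtain ⟨D, hD, rfl⟩ : ∃ D, 0 ≤ D ∧ S = x1 + x2 + x3 + y13 + y23 + D :=
    ⟨S - (x1 + x2 + x3 + y13 + y23), by linarith, by ring⟩
  rw [div_add_div _ _ (ne_of_gt hB) (ne_of_gt hC), div_le_div_iff₀ hA (by positivity)]
  nlinarith [mul_nonneg (mul_nonneg h1 h2) h2,
    mul_nonneg (mul_nonneg h1 h2) h3,
    mul_nonneg (mul_nonneg h1 h2) h4,
    mul_nonneg (mul_nonneg h1 h2) h5,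
    mul_nonneg (mul_nonneg h1 h2) hD,
    mul_nonneg (mul_nonneg h2 h3) h3,
    mul_nonneg (mul_nonneg h2 h3) h4,
    mul_nonneg (mul_nonneg h2 h3) h5,
    mul_nonneg (mul_nonneg h2 h3) hD,
    mul_nonneg (mul_nonneg h2 h2) h4,
    mul_nonneg (mul_nonneg h2 h4) h4,
    mul_nonneg (mul_nonneg h2 h4) h5,
    mul_nonneg (mul_nonneg h2 h4) hD,
    mul_nonneg (mul_nonneg h2 h5) hD,
    mul_nonneg (mul_nonneg h2 h2) hD,
    mul_nonneg (mul_nonneg h2 hD) hD,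
    mul_nonneg (mul_nonneg h1 h3) h5,
    mul_nonneg (mul_nonneg h1 h4) h5,
    mul_nonneg (mul_nonneg h3 h3) h5,
    mul_nonneg (mul_nonneg h3 h4) h5,
    mul_nonneg (mul_nonneg h3 h5) h5,
    mul_nonneg (mul_nonneg h3 h5) hD,
    mul_nonneg (mul_nonneg h4 h4) h5,
    mul_nonneg (mul_nonneg h4 h5) h5,
    mul_nonneg (mul_nonneg h4 h5) hD,
    mul_nonneg (mul_nonneg h1 h1) h3,
    mul_nonneg (mul_nonneg h1 h3) h4,
    mul_nonneg (mul_nonneg h1 h3) hD,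
    mul_nonneg (mul_nonneg h3 h4) h4,
    mul_nonneg (mul_nonneg h3 h4) hD,
    mul_nonneg (mul_nonneg h1 h1) h4,
    mul_nonneg (mul_nonneg h1 h4) h4,
    mul_nonneg (mul_nonneg h1 h4) hD,
    mul_nonneg (mul_nonneg h4 h4) h4,
    mul_nonneg (mul_nonneg h4 h4) hD,
    mul_nonneg (mul_nonneg h4 hD) hD
]

private theorem ru_nonneg {V : Type*} [DecidableEq V] {ia : V → ℝ} (hia : ∀ v, 0 ≤ ia v)
    (F G : Finset V) : 0 ≤ ru ia F G :=
  Finset.sum_nonneg fun v _ => hia v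

private theorem mi_eq_ru {V : Type*} [DecidableEq V] (ia : V → ℝ) (F G : Finset V) :
    mi ia F G = ru ia G F := rfl

/-- One-sided normalized triangle inequality. -/
private theorem ru_div_triangle {V : Type*} [DecidableEq V] (ia : V → ℝ)
    (hia : ∀ v, 0 ≤ ia v) (F G H : Finset V)
    (hA : 0 < ∑ v ∈ F ∪ G, ia v) (hB : 0 < ∑ v ∈ G ∪ H, ia v)
    (hC : 0 < ∑ v ∈ F ∪ H, ia v) :
    ru ia F H / ∑ v ∈ F ∪ H, ia v ≤
      ru ia F G / ∑ v ∈ F ∪ G, ia v + ru ia G H / ∑ v ∈ G ∪ H, ia v := by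
  classical
  set S := ∑ v ∈ F ∪ G ∪ H, ia v with hSdef
  set x1 := ∑ v ∈ F \ (G ∪ H), ia v with hx1
  set x2 := ∑ v ∈ G \ (F ∪ H), ia v with hx2
  set x3 := ∑ v ∈ H \ (F ∪ G), ia v with hx3
  set y13 := ∑ v ∈ (F ∩ H) \ G, ia v with hy13
  set y23 := ∑ v ∈ (G ∩ H) \ F, ia v with hy23
  have eFH : ∑ v ∈ F ∪ H, ia v = S - x2 := by
    rw [hSdef, hx2, eq_sub_iff_add_eq, ← Finset.sum_union
      (by simp [Finset.disjoint_left]; tauto : Disjoint (F ∪ H) (G \ (F ∪ H)))]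
    apply Finset.sum_congr _ (fun _ _ => rfl)
    ext v; simp only [Finset.mem_union, Finset.mem_sdiff, Finset.mem_inter]; tauto
  have eFG : ∑ v ∈ F ∪ G, ia v = S - x3 := by
    rw [hSdef, hx3, eq_sub_iff_add_eq, ← Finset.sum_union
      (by simp [Finset.disjoint_left]; tauto : Disjoint (F ∪ G) (H \ (F ∪ G)))]
    apply Finset.sum_congr _ (fun _ _ => rfl)
    ext v; simp only [Finset.mem_union, Finset.mem_sdiff, Finset.mem_inter]; tauto
  have eGH : ∑ v ∈ G ∪ H, ia v = S - x1 := by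
    rw [hSdef, hx1, eq_sub_iff_add_eq, ← Finset.sum_union
      (by simp [Finset.disjoint_left]; tauto : Disjoint (G ∪ H) (F \ (G ∪ H)))]
    apply Finset.sum_congr _ (fun _ _ => rfl)
    ext v; simp only [Finset.mem_union, Finset.mem_sdiff, Finset.mem_inter]; tauto
  have eruFH : ru ia F H = x3 + y23 := by
    rw [ru, hx3, hy23, ← Finset.sum_union
      (by simp [Finset.disjoint_left]; tauto : Disjoint (H \ (F ∪ G)) ((G ∩ H) \ F))]
    apply Finset.sum_congr _ (fun _ _ => rfl)
    ext v; simp only [Finset.mem_union, Finset.mem_sdiff, Finset.mem_inter]; tauto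
  have eruFG : ru ia F G = x2 + y23 := by
    rw [ru, hx2, hy23, ← Finset.sum_union
      (by simp [Finset.disjoint_left]; tauto : Disjoint (G \ (F ∪ H)) ((G ∩ H) \ F))]
    apply Finset.sum_congr _ (fun _ _ => rfl)
    ext v; simp only [Finset.mem_union, Finset.mem_sdiff, Finset.mem_inter]; tauto
  have eruGH : ru ia G H = x3 + y13 := by
    rw [ru, hx3, hy13, ← Finset.sum_union
      (by simp [Finset.disjoint_left]; tauto : Disjoint (H \ (F ∪ G)) ((F ∩ H) \ G))]
    apply Finset.sum_congr _ (fun _ _ => rfl)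
    ext v; simp only [Finset.mem_union, Finset.mem_sdiff, Finset.mem_inter]; tauto
  have hS : x1 + x2 + x3 + y13 + y23 ≤ S := by
    rw [hSdef, hx1, hx2, hx3, hy13, hy23]
    rw [← Finset.sum_union (by simp [Finset.disjoint_left]; tauto :
        Disjoint (F \ (G ∪ H)) (G \ (F ∪ H))),
      ← Finset.sum_union (by simp [Finset.disjoint_left]; tauto :
        Disjoint (F \ (G ∪ H) ∪ G \ (F ∪ H)) (H \ (F ∪ G))),
      ← Finset.sum_union (by simp [Finset.disjoint_left]; tauto :
        Disjoint (F \ (G ∪ H) ∪ G \ (F ∪ H) ∪ H \ (F ∪ G)) ((F ∩ H) \ G)),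
      ← Finset.sum_union (by simp [Finset.disjoint_left]; tauto :
        Disjoint (F \ (G ∪ H) ∪ G \ (F ∪ H) ∪ H \ (F ∪ G) ∪ (F ∩ H) \ G) ((G ∩ H) \ F))]
    apply Finset.sum_le_sum_of_subset_of_nonneg
    · intro v
      simp only [Finset.mem_union, Finset.mem_sdiff, Finset.mem_inter]
      tauto
    · exact fun v _ _ => hia v
  rw [eFH, eFG, eGH, eruFH, eruFG, eruGH]
  exact scalar_core x1 x2 x3 y13 y23 S
    (Finset.sum_nonneg fun v _ => hia v) (Finset.sum_nonneg fun v _ => hia v)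
    (Finset.sum_nonneg fun v _ => hia v) (Finset.sum_nonneg fun v _ => hia v)
    (Finset.sum_nonneg fun v _ => hia v) hS (eFH ▸ hC) (eFG ▸ hA) (eGH ▸ hB)

/-- Two-term Minkowski inequality. -/
private theorem minkowski_two {p : ℝ} (hp : 1 ≤ p) {a1 b1 a2 b2 : ℝ}
    (ha1 : 0 ≤ a1) (hb1 : 0 ≤ b1) (ha2 : 0 ≤ a2) (hb2 : 0 ≤ b2) :
    ((a1 + a2) ^ p + (b1 + b2) ^ p) ^ (1 / p) ≤
      (a1 ^ p + b1 ^ p) ^ (1 / p) + (a2 ^ p + b2 ^ p) ^ (1 / p) := by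
  have := Real.Lp_add_le_of_nonneg (s := (Finset.univ : Finset (Fin 2)))
    (f := ![a1, b1]) (g := ![a2, b2]) hp
    (by intro i _; fin_cases i <;> simpa) (by intro i _; fin_cases i <;> simpa)
  simpa [Fin.sum_univ_two] using this

private theorem semDistN_nonneg {V : Type*} [DecidableEq V] (ia : V → ℝ) (p : ℝ)
    (hia : ∀ v, 0 ≤ ia v) (F G : Finset V) : 0 ≤ semDistN ia p F G := by
  unfold semDistN
  split
  · apply div_nonneg _ (le_of_lt (by assumption))
    apply Real.rpow_nonneg
    have h1 := Real.rpow_nonneg (ru_nonneg hia F G) p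
    have h2 := Real.rpow_nonneg (ru_nonneg hia G F) p
    rw [mi_eq_ru]; linarith
  · exact le_rfl

/-- For a nonnegative weight function `ia` and real `p ≥ 1`, the normalized semantic
distance satisfies the triangle inequality. -/
theorem normalized_semantic_distance_triangle {V : Type*} [DecidableEq V] (ia : V → ℝ)
    (hia : ∀ v, 0 ≤ ia v) (p : ℝ) (hp : 1 ≤ p) (F G H : Finset V) :
    semDistN ia p F H ≤ semDistN ia p F G + semDistN ia p G H := by
  classical
  have hp0 : 0 < p := lt_of_lt_of_le one_pos hp
  by_cases hC : 0 < ∑ v ∈ F ∪ H, ia v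
  · by_cases hA : 0 < ∑ v ∈ F ∪ G, ia v
    · by_cases hB : 0 < ∑ v ∈ G ∪ H, ia v
      · -- main case: all denominators positive
        have h_ru : ru ia F H / ∑ v ∈ F ∪ H, ia v ≤
            ru ia F G / ∑ v ∈ F ∪ G, ia v + ru ia G H / ∑ v ∈ G ∪ H, ia v :=
          ru_div_triangle ia hia F G H hA hB hC
        have hB' : 0 < ∑ v ∈ H ∪ G, ia v := by rwa [Finset.union_comm]
        have hA' : 0 < ∑ v ∈ G ∪ F, ia v := by rwa [Finset.union_comm]
        have hC' : 0 < ∑ v ∈ H ∪ F, ia v := by rwa [Finset.union_comm]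
        have h_mi : mi ia F H / ∑ v ∈ F ∪ H, ia v ≤
            mi ia F G / ∑ v ∈ F ∪ G, ia v + mi ia G H / ∑ v ∈ G ∪ H, ia v := by
          have := ru_div_triangle ia hia H G F hB' hA' hC'
          rw [Finset.union_comm H F, Finset.union_comm H G, Finset.union_comm G F] at this
          rw [mi_eq_ru ia F H, mi_eq_ru ia F G, mi_eq_ru ia G H]
          linarith
        have key : ∀ (X Y : Finset V) (h : 0 < ∑ v ∈ X ∪ Y, ia v),
            (ru ia X Y ^ p + mi ia X Y ^ p) ^ (1 / p) / ∑ v ∈ X ∪ Y, ia v =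
            ((ru ia X Y / ∑ v ∈ X ∪ Y, ia v) ^ p +
              (mi ia X Y / ∑ v ∈ X ∪ Y, ia v) ^ p) ^ (1 / p) := by
          intro X Y h
          have hru := ru_nonneg hia X Y
          have hmi : 0 ≤ mi ia X Y := by rw [mi_eq_ru]; exact ru_nonneg hia Y X
          have hdenom : ((∑ v ∈ X ∪ Y, ia v) ^ p) ^ (1 / p) = ∑ v ∈ X ∪ Y, ia v := by
            rw [← Real.rpow_mul h.le, mul_one_div_cancel hp0.ne', Real.rpow_one]
          rw [Real.div_rpow hru h.le, Real.div_rpow hmi h.le, ← add_div,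
            Real.div_rpow (add_nonneg (Real.rpow_nonneg hru p) (Real.rpow_nonneg hmi p))
              (Real.rpow_nonneg h.le p), hdenom]
        unfold semDistN
        rw [if_pos hC, if_pos hA, if_pos hB, key F H hC, key F G hA, key G H hB]
        calc ((ru ia F H / ∑ v ∈ F ∪ H, ia v) ^ p +
              (mi ia F H / ∑ v ∈ F ∪ H, ia v) ^ p) ^ (1 / p)
            ≤ ((ru ia F G / ∑ v ∈ F ∪ G, ia v + ru ia G H / ∑ v ∈ G ∪ H, ia v) ^ p +
              (mi ia F G / ∑ v ∈ F ∪ G, ia v + mi ia G H / ∑ v ∈ G ∪ H, ia v) ^ p) ^ (1 / p) := by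
              have h1 : 0 ≤ ru ia F H / ∑ v ∈ F ∪ H, ia v :=
                div_nonneg (ru_nonneg hia F H) hC.le
              have h2 : 0 ≤ mi ia F H / ∑ v ∈ F ∪ H, ia v :=
                div_nonneg (by rw [mi_eq_ru]; exact ru_nonneg hia H F) hC.le
              apply Real.rpow_le_rpow
                (add_nonneg (Real.rpow_nonneg h1 p) (Real.rpow_nonneg h2 p))
                (add_le_add (Real.rpow_le_rpow h1 h_ru hp0.le)
                  (Real.rpow_le_rpow h2 h_mi hp0.le))
                (one_div_nonneg.mpr hp0.le)
          _ ≤ _ :=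
              minkowski_two hp (div_nonneg (ru_nonneg hia F G) hA.le)
                (div_nonneg (by rw [mi_eq_ru]; exact ru_nonneg hia G F) hA.le)
                (div_nonneg (ru_nonneg hia G H) hB.le)
                (div_nonneg (by rw [mi_eq_ru]; exact ru_nonneg hia H G) hB.le)
      · -- Σ over G ∪ H is zero : ia vanishes on G and H
        have hz : ∀ v ∈ G ∪ H, ia v = 0 := by
          intro v hv
          have h0 : ∑ v ∈ G ∪ H, ia v = 0 :=
            le_antisymm (not_lt.mp hB) (Finset.sum_nonneg fun v _ => hia v)
          exact (Finset.sum_eq_zero_iff_of_nonneg fun v _ => hia v).mp h0 v hv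
        have eden : ∑ v ∈ F ∪ H, ia v = ∑ v ∈ F ∪ G, ia v := by
          rw [← Finset.sum_subset (Finset.subset_union_left : F ⊆ F ∪ H)
            (fun v hv hnv => hz v (Finset.mem_union_right _
              ((Finset.mem_union.mp hv).resolve_left hnv))),
            ← Finset.sum_subset (Finset.subset_union_left : F ⊆ F ∪ G)
            (fun v hv hnv => hz v (Finset.mem_union_left _
              ((Finset.mem_union.mp hv).resolve_left hnv)))]
        have eru1 : ru ia F H = 0 := Finset.sum_eq_zero fun v hv =>
          hz v (Finset.mem_union_right _ (Finset.mem_sdiff.mp hv).1)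
        have eru2 : ru ia F G = 0 := Finset.sum_eq_zero fun v hv =>
          hz v (Finset.mem_union_left _ (Finset.mem_sdiff.mp hv).1)
        have emi1 : mi ia F H = ∑ v ∈ F, ia v :=
          Finset.sum_subset Finset.sdiff_subset (fun v hv hnv => by
            simp only [Finset.mem_sdiff, hv, true_and, not_not] at hnv
            exact hz v (Finset.mem_union_right _ hnv))
        have emi2 : mi ia F G = ∑ v ∈ F, ia v :=
          Finset.sum_subset Finset.sdiff_subset (fun v hv hnv => by
            simp only [Finset.mem_sdiff, hv, true_and, not_not] at hnv
            exact hz v (Finset.mem_union_left _ hnv))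
        have eGH : semDistN ia p G H = 0 := by unfold semDistN; rw [if_neg hB]
        have eFH : semDistN ia p F H = semDistN ia p F G := by
          unfold semDistN
          rw [eru1, eru2, emi1, emi2, eden]
        rw [eFH, eGH, add_zero]
    · -- Σ over F ∪ G is zero : ia vanishes on F and G
      have hz : ∀ v ∈ F ∪ G, ia v = 0 := by
        intro v hv
        have h0 : ∑ v ∈ F ∪ G, ia v = 0 :=
          le_antisymm (not_lt.mp hA) (Finset.sum_nonneg fun v _ => hia v)
        exact (Finset.sum_eq_zero_iff_of_nonneg fun v _ => hia v).mp h0 v hv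
      have eden : ∑ v ∈ F ∪ H, ia v = ∑ v ∈ G ∪ H, ia v := by
        rw [← Finset.sum_subset (Finset.subset_union_right : H ⊆ F ∪ H)
          (fun v hv hnv => hz v (Finset.mem_union_left _
            ((Finset.mem_union.mp hv).resolve_right hnv))),
          ← Finset.sum_subset (Finset.subset_union_right : H ⊆ G ∪ H)
          (fun v hv hnv => hz v (Finset.mem_union_right _
            ((Finset.mem_union.mp hv).resolve_right hnv)))]
      have emi1 : mi ia F H = 0 := Finset.sum_eq_zero fun v hv =>
        hz v (Finset.mem_union_left _ (Finset.mem_sdiff.mp hv).1)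
      have emi2 : mi ia G H = 0 := Finset.sum_eq_zero fun v hv =>
        hz v (Finset.mem_union_right _ (Finset.mem_sdiff.mp hv).1)
      have eru1 : ru ia F H = ∑ v ∈ H, ia v :=
        Finset.sum_subset Finset.sdiff_subset (fun v hv hnv => by
          simp only [Finset.mem_sdiff, hv, true_and, not_not] at hnv
          exact hz v (Finset.mem_union_left _ hnv))
      have eru2 : ru ia G H = ∑ v ∈ H, ia v :=
        Finset.sum_subset Finset.sdiff_subset (fun v hv hnv => by
          simp only [Finset.mem_sdiff, hv, true_and, not_not] at hnv
          exact hz v (Finset.mem_union_right _ hnv))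
      have eFG : semDistN ia p F G = 0 := by unfold semDistN; rw [if_neg hA]
      have eFH : semDistN ia p F H = semDistN ia p G H := by
        unfold semDistN
        rw [emi1, emi2, eru1, eru2, eden]
      rw [eFH, eFG, zero_add]
  · have eFH : semDistN ia p F H = 0 := by unfold semDistN; rw [if_neg hC]
    rw [eFH]
    exact add_nonneg (semDistN_nonneg ia p hia F G) (semDistN_nonneg ia p hia G H)
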